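/- Let Γ ≤ SL₂(ℝ) be a lattice, δ ∈ SL₂(ℝ), and consider the subset Y = {(Γh, Γδh) : h ∈ SL₂(ℝ)} of (Γ\SL₂(ℝ)) × (Γ\SL₂(ℝ)). If δ lies in the commensurator COM(Γ) = {g : g⁻¹Γg ∩ Γ has finite index in both Γ and g⁻¹Γg}, then Y is a closed subset of the product. -/

import Mathlib

/-- `SL₂(ℝ)`. -/
abbrev SL2R := Matrix.SpecialLinearGroup (Fin 2) ℝ

/-- The topology on `SL₂(ℝ)` induced from the space of `2 × 2` real matrices. -/
noncomputable instance : TopologicalSpace SL2R :=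
  TopologicalSpace.induced (fun g : SL2R => (g : Matrix (Fin 2) (Fin 2) ℝ)) inferInstance

/-- The conjugate subgroup `g⁻¹ Γ g`. -/
def conjSubgroup (g : SL2R) (Γ : Subgroup SL2R) : Subgroup SL2R :=
  Subgroup.map ((MulAut.conj g⁻¹).toMonoidHom) Γ

/-- The commensurator of `Γ` in `SL₂(ℝ)` as a set. -/
def commenSet (Γ : Subgroup SL2R) : Set SL2R :=
  {g | (conjSubgroup g Γ).relIndex Γ ≠ 0 ∧ Γ.relIndex (conjSubgroup g Γ) ≠ 0}

lemma cont_coe : Continuous (fun g : SL2R => (g : Matrix (Fin 2) (Fin 2) ℝ)) :=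
  continuous_induced_dom

lemma emb_coe : Topology.IsEmbedding (fun g : SL2R => (g : Matrix (Fin 2) (Fin 2) ℝ)) :=
  ⟨⟨rfl⟩, Subtype.coe_injective⟩

noncomputable instance : T2Space SL2R := emb_coe.t2Space

noncomputable instance : ContinuousMul SL2R :=
  ⟨continuous_induced_rng.2 <| by
    exact (cont_coe.comp continuous_fst).matrix_mul (cont_coe.comp continuous_snd)⟩

noncomputable instance : ContinuousInv SL2R :=
  ⟨continuous_induced_rng.2 <| by
    have : ((fun g : SL2R => (g : Matrix (Fin 2) (Fin 2) ℝ)) ∘ fun g : SL2R => g⁻¹)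
        = fun g : SL2R => Matrix.adjugate (g : Matrix (Fin 2) (Fin 2) ℝ) := by
      funext g; exact Matrix.SpecialLinearGroup.coe_inv g
    rw [this]; exact cont_coe.matrix_adjugate⟩

noncomputable instance : IsTopologicalGroup SL2R := ⟨⟩

/-- The quotient map onto the right-coset space is open. -/
lemma isOpenMap_mk (Γ : Subgroup SL2R) :
    IsOpenMap (Quotient.mk (QuotientGroup.rightRel Γ)) := by
  intro U hU
  rw [isOpen_coinduced]
  have key : Quotient.mk (QuotientGroup.rightRel Γ) ⁻¹'
      (Quotient.mk (QuotientGroup.rightRel Γ) '' U)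
      = ⋃ γ : Γ, (fun x : SL2R => (γ : SL2R) * x) ⁻¹' U := by
    ext x
    simp only [Set.mem_preimage, Set.mem_image, Set.mem_iUnion]
    constructor
    · rintro ⟨u, hu, h⟩
      have : u * x⁻¹ ∈ Γ :=
        QuotientGroup.rightRel_apply.mp (Quotient.exact h.symm)
      exact ⟨⟨u * x⁻¹, this⟩, by simpa using hu⟩
    · rintro ⟨γ, hγ⟩
      refine ⟨(γ : SL2R) * x, hγ, ?_⟩
      exact Quotient.sound (QuotientGroup.rightRel_apply.mpr (by simp))
  show IsOpen (Quotient.mk (QuotientGroup.rightRel Γ) ⁻¹'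
      (Quotient.mk (QuotientGroup.rightRel Γ) '' U))
  rw [key]
  exact isOpen_iUnion fun γ => hU.preimage (continuous_const.mul continuous_id)

/-- (4.6)–(4.7): for a lattice `Γ ≤ SL₂(ℝ)` and `δ` in the commensurator of
`Γ`, the set `Y = {(Γh, Γδh) : h ∈ SL₂(ℝ)}` is closed in
`(Γ\SL₂(ℝ)) × (Γ\SL₂(ℝ))`. -/
theorem graph_closed_of_commensurator (Γ : Subgroup SL2R)
    (hdisc : DiscreteTopology Γ)
    (δ : SL2R) (hδ : δ ∈ commenSet Γ) :
    IsClosed {y : Quotient (QuotientGroup.rightRel Γ) × Quotient (QuotientGroup.rightRel Γ) |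
      ∃ h : SL2R, y = (Quotient.mk (QuotientGroup.rightRel Γ) h,
        Quotient.mk (QuotientGroup.rightRel Γ) (δ * h))} := by
  classical
  set π := Quotient.mk (QuotientGroup.rightRel Γ) with hπ
  -- the product of the quotient maps is a quotient map
  have hsurj : Function.Surjective π := Quotient.mk''_surjective
  have hq : Topology.IsQuotientMap (Prod.map π π) :=
    ((isOpenMap_mk Γ).prodMap (isOpenMap_mk Γ)).isQuotientMap
      (continuous_quotient_mk'.prodMap continuous_quotient_mk')
      (hsurj.prodMap hsurj)
  rw [← hq.isClosed_preimage]
  -- the double coset ΓδΓ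
  set D : Set SL2R := {x | ∃ γ₁ ∈ Γ, ∃ γ₂ ∈ Γ, x = γ₁ * δ * γ₂} with hD
  -- the preimage is the preimage of ΓδΓ under a continuous map
  have hpre : Prod.map π π ⁻¹'
      {y : Quotient (QuotientGroup.rightRel Γ) × Quotient (QuotientGroup.rightRel Γ) |
        ∃ h : SL2R, y = (π h, π (δ * h))}
      = (fun q : SL2R × SL2R => q.2 * q.1⁻¹) ⁻¹' D := by
    ext ⟨a, b⟩
    simp only [Set.mem_preimage, Prod.map_apply, Set.mem_setOf_eq, Prod.mk.injEq]
    constructor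
    · rintro ⟨h, h1, h2⟩
      have g1 : h * a⁻¹ ∈ Γ := QuotientGroup.rightRel_apply.mp (Quotient.exact h1)
      have g2 : δ * h * b⁻¹ ∈ Γ := QuotientGroup.rightRel_apply.mp (Quotient.exact h2)
      refine ⟨(δ * h * b⁻¹)⁻¹, inv_mem g2, h * a⁻¹, g1, ?_⟩
      group
    · rintro ⟨γ₁, hγ₁, γ₂, hγ₂, hx⟩
      refine ⟨γ₂ * a, ?_, ?_⟩
      · exact Quotient.sound (QuotientGroup.rightRel_apply.mpr (by simpa using hγ₂))
      · refine Quotient.sound (QuotientGroup.rightRel_apply.mpr ?_)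
        have hb : b = γ₁ * δ * γ₂ * a := by rw [← hx]; group
        have : δ * (γ₂ * a) * b⁻¹ = γ₁⁻¹ := by rw [hb]; group
        rw [this]; exact inv_mem hγ₁
  rw [hpre]
  -- ΓδΓ is a finite union of closed right cosets Γδγ
  have hΓclosed : IsClosed (Γ : Set SL2R) := Subgroup.isClosed_of_discrete
  -- f sends γ ∈ Γ to the coset Γδγ
  set f : Γ → Set SL2R := fun γ => (fun x : SL2R => x * (δ * (γ : SL2R))⁻¹) ⁻¹' Γ with hf
  have hfclosed : ∀ γ, IsClosed (f γ) :=
    fun γ => hΓclosed.preimage (continuous_id.mul continuous_const)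
  -- f factors through the finite quotient by Δ = δ⁻¹Γδ ∩ Γ
  set Δ : Subgroup Γ := (conjSubgroup δ Γ).subgroupOf Γ with hΔ
  have hfin : Finite (Quotient (QuotientGroup.rightRel Δ)) := by
    have : Δ.index ≠ 0 := hδ.1
    have : Finite (Γ ⧸ Δ) := Nat.finite_of_card_ne_zero this
    exact Finite.of_equiv _ (QuotientGroup.quotientRightRelEquivQuotientLeftRel Δ).symm
  have hcompat : ∀ γ γ' : Γ, (QuotientGroup.rightRel Δ) γ γ' → f γ = f γ' := by
    intro γ γ' hrel
    have hmem : (γ' : SL2R) * (γ : SL2R)⁻¹ ∈ conjSubgroup δ Γ := by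
      have := QuotientGroup.rightRel_apply.mp hrel
      rw [Subgroup.mem_subgroupOf] at this
      simpa using this
    obtain ⟨g, hg, hgeq⟩ := hmem
    -- hgeq : δ⁻¹ * g * δ = γ' * γ⁻¹
    have key : δ * (γ' : SL2R) = g * (δ * (γ : SL2R)) := by
      have : ((MulAut.conj δ⁻¹).toMonoidHom g : SL2R) = (γ' : SL2R) * (γ : SL2R)⁻¹ := hgeq
      simp only [MulEquiv.toMonoidHom_eq_coe, MonoidHom.coe_coe, MulAut.conj_apply] at this
      calc δ * (γ' : SL2R) = δ * ((γ' : SL2R) * (γ : SL2R)⁻¹) * γ := by group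
        _ = δ * (δ⁻¹ * g * δ) * γ := by rw [← this]; group
        _ = g * (δ * (γ : SL2R)) := by group
    ext x
    simp only [hf, Set.mem_preimage, SetLike.mem_coe]
    constructor
    · intro hx
      have : x * (δ * (γ' : SL2R))⁻¹ = (x * (δ * (γ : SL2R))⁻¹) * g⁻¹ := by
        rw [key]; group
      rw [this]; exact mul_mem hx (inv_mem hg)
    · intro hx
      have : x * (δ * (γ : SL2R))⁻¹ = (x * (δ * (γ' : SL2R))⁻¹) * g := by
        rw [key]; group
      rw [this]; exact mul_mem hx hg
  set F : Quotient (QuotientGroup.rightRel Δ) → Set SL2R :=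
    Quotient.lift f hcompat with hF
  have hDeq : D = ⋃ q, F q := by
    ext x
    simp only [hD, Set.mem_setOf_eq, Set.mem_iUnion]
    constructor
    · rintro ⟨γ₁, hγ₁, γ₂, hγ₂, hx⟩
      refine ⟨Quotient.mk _ ⟨γ₂, hγ₂⟩, ?_⟩
      show x * (δ * γ₂)⁻¹ ∈ Γ
      rw [hx]
      have : γ₁ * δ * γ₂ * (δ * γ₂)⁻¹ = γ₁ := by group
      rw [this]; exact hγ₁
    · rintro ⟨q, hq'⟩
      obtain ⟨γ, rfl⟩ := Quotient.exists_rep q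
      have hx : x * (δ * (γ : SL2R))⁻¹ ∈ Γ := hq'
      exact ⟨x * (δ * (γ : SL2R))⁻¹, hx, γ, γ.2, by group⟩
  have hDclosed : IsClosed D := by
    rw [hDeq]
    exact isClosed_iUnion_of_finite fun q => by
      obtain ⟨γ, rfl⟩ := Quotient.exists_rep q
      exact hfclosed γ
  exact hDclosed.preimage (continuous_snd.mul continuous_fst.inv)
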